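/- For every partition π of [0,1] into k intervals with diam π ≤ 1/4, there exists a permutation π' of π such that for h = 1, 2, the number N_h of right endpoints of intervals of π' lying in I_h^1 = [(h−1)/2, h/2] satisfies k/2 − 1 ≤ N_h ≤ k/2 + 1. -/

import Mathlib

open MeasureTheory Filter

/-- A partition of `[0,1]` into `k` closed intervals, determined by points
`0 = t 0 < t 1 < ⋯ < t k = 1`. -/
structure UnitPartition where
  k : ℕ
  k_pos : 0 < k
  t : ℕ → ℝ
  t_zero : t 0 = 0
  t_last : t k = 1
  mono : ∀ i < k, t i < t (i + 1)

namespace UnitPartition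

/-- The length of the `i`-th interval (`0`-indexed). -/
def length (π : UnitPartition) (i : ℕ) : ℝ := π.t (i + 1) - π.t i

/-- The diameter of a partition: the maximal length of its intervals. -/
noncomputable def diam (π : UnitPartition) : ℝ :=
  (Finset.range π.k).sup' (Finset.nonempty_range_iff.mpr π.k_pos.ne') π.length

end UnitPartition

/-- A sequence of partitions is uniformly distributed if for every continuous `f` on `[0,1]`,
`(1/k(n)) ∑_{i=1}^{k(n)} f(tᵢⁿ) → ∫₀¹ f`. -/
def IsUD (π : ℕ → UnitPartition) : Prop :=
  ∀ f : ℝ → ℝ, ContinuousOn f (Set.Icc 0 1) →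
    Tendsto (fun n => (∑ i ∈ Finset.range (π n).k, f ((π n).t (i + 1))) / ((π n).k : ℝ))
      atTop (nhds (∫ x in (0:ℝ)..1, f x))

/-- `π'` is a permutation of `π`: it has the same number of intervals, and its list of
interval lengths is a rearrangement of that of `π`. -/
def IsPermutationOf (π' π : UnitPartition) : Prop :=
  π'.k = π.k ∧ ∃ e : Equiv.Perm (Fin π.k), ∀ i : Fin π.k, π'.length i = π.length (e i)

theorem UnitPartition.t_mono (π : UnitPartition) : ∀ {i j : ℕ}, i ≤ j → j ≤ π.k → π.t i ≤ π.t j := by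
  intro i j hij hj
  induction j with
  | zero => simp_all
  | succ n ih =>
    rcases Nat.lt_or_ge i (n + 1) with h | h
    · have h1 : π.t i ≤ π.t n := ih (by omega) (by omega)
      exact h1.trans (π.mono n (by omega)).le
    · have : i = n + 1 := by omega
      rw [this]

theorem UnitPartition.t_strictMono (π : UnitPartition) {i j : ℕ} (hij : i < j) (hj : j ≤ π.k) :
    π.t i < π.t j := by
  have h1 : π.t i ≤ π.t (j - 1) := π.t_mono (by omega) (by omega)
  have h2 : π.t (j - 1) < π.t (j - 1 + 1) := π.mono (j - 1) (by omega)
  have : j - 1 + 1 = j := by omega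
  rw [this] at h2
  linarith

section Construction

variable (π : UnitPartition)

/-- key construction : given a set `A` and `x ∉ A`, build the permuted partition with
the intervals of `A` first, then `x`, then the rest. -/
noncomputable def UnitPartition.permList (A : Finset (Fin π.k)) (x : Fin π.k) : List (Fin π.k) :=
  A.toList ++ x :: (Finset.univ \ insert x A).toList

theorem UnitPartition.permList_nodup (A : Finset (Fin π.k)) (x : Fin π.k) (hx : x ∉ A) :
    (UnitPartition.permList π A x).Nodup := by
  refine List.Nodup.append A.nodup_toList ?_ ?_
  · refine List.nodup_cons.mpr ⟨?_, Finset.nodup_toList _⟩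
    simp [Finset.mem_toList]
  · intro a ha hb
    have haA : a ∈ A := Finset.mem_toList.mp ha
    rcases List.mem_cons.mp hb with h | h
    · exact hx (h ▸ haA)
    · have := Finset.mem_toList.mp h
      simp only [Finset.mem_sdiff, Finset.mem_insert] at this
      exact this.2 (Or.inr haA)

theorem UnitPartition.permList_mem (A : Finset (Fin π.k)) (x : Fin π.k) (a : Fin π.k) :
    a ∈ UnitPartition.permList π A x := by
  unfold UnitPartition.permList
  by_cases h1 : a ∈ A
  · exact List.mem_append_left _ (Finset.mem_toList.mpr h1)
  · refine List.mem_append_right _ ?_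
    by_cases h2 : a = x
    · exact h2 ▸ List.mem_cons_self
    · exact List.mem_cons_of_mem _ (Finset.mem_toList.mpr (by simp [h1, h2]))

theorem UnitPartition.permList_length (A : Finset (Fin π.k)) (x : Fin π.k) (hx : x ∉ A) :
    (UnitPartition.permList π A x).length = π.k := by
  have h1 : (insert x A).card = A.card + 1 := Finset.card_insert_of_notMem hx
  have h2 : (insert x A).card ≤ π.k := by
    simpa using Finset.card_le_univ (insert x A)
  have h3 : (Finset.univ \ insert x A).card = π.k - (A.card + 1) := by
    rw [Finset.card_sdiff_of_subset (Finset.subset_univ _), Finset.card_univ, Fintype.card_fin, h1]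
  simp only [UnitPartition.permList, List.length_append, List.length_cons, Finset.length_toList, h3]
  omega

end Construction

noncomputable def UnitPartition.permute (π : UnitPartition) (L : List (Fin π.k))
    (nd : L.Nodup) (hmem : ∀ a, a ∈ L) (hlen : L.length = π.k) : UnitPartition where
  k := π.k
  k_pos := π.k_pos
  t := fun n => ((L.map fun i => π.length i.val).take n).sum
  t_zero := by simp
  t_last := by
    have hM : (L.map fun i : Fin π.k => π.length i.val).length ≤ π.k := by simpa using hlen.le
    show ((L.map fun i : Fin π.k => π.length i.val).take π.k).sum = 1
    rw [List.take_of_length_le hM]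
    rw [← List.sum_toFinset _ nd]
    have huniv : L.toFinset = Finset.univ := Finset.eq_univ_iff_forall.mpr fun a => by
      simpa using hmem a
    rw [huniv, ← Finset.sum_range (fun i => π.length i)]
    have := Finset.sum_range_sub π.t π.k
    simp only [UnitPartition.length]
    rw [this, π.t_zero, π.t_last]
    ring
  mono := by
    intro i hi
    have hM : i < (L.map fun i : Fin π.k => π.length i.val).length := by simpa [hlen] using hi
    show ((L.map fun i : Fin π.k => π.length i.val).take i).sum <
      ((L.map fun i : Fin π.k => π.length i.val).take (i + 1)).sum
    rw [List.sum_take_succ _ i hM]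
    have : 0 < (L.map fun i : Fin π.k => π.length i.val)[i] := by
      rw [List.getElem_map]
      exact sub_pos.mpr (π.mono _ (L[i]).isLt)
    linarith

theorem UnitPartition.permList_take_card (π : UnitPartition) (A : Finset (Fin π.k)) (x : Fin π.k) :
    ((((π.permList A x).map fun i => π.length i.val)).take A.card).sum
      = ∑ i ∈ A, π.length i.val := by
  unfold UnitPartition.permList
  rw [List.map_append, List.take_left' (by simp)]
  exact Finset.sum_map_toList A fun i => π.length i.val

theorem UnitPartition.permList_getElem_card (π : UnitPartition) (A : Finset (Fin π.k)) (x : Fin π.k)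
    (h : A.card < (π.permList A x).length) :
    (π.permList A x)[A.card] = x := by
  unfold UnitPartition.permList at *
  rw [List.getElem_append_right (by simp)]
  simp


open Finset in
lemma exists_good_subset (k : ℕ) (hk : 2 ≤ k) (l : Fin k → ℝ) (hpos : ∀ i, 0 < l i)
    (hsum : ∑ i, l i = 1) :
    ∃ (A : Finset (Fin k)) (x : Fin k), x ∉ A ∧
      (∑ i ∈ A, l i) ≤ 1 / 2 ∧ 1 / 2 < (∑ i ∈ A, l i) + l x ∧
      k ≤ 2 * A.card + 2 ∧ 2 * A.card ≤ k + 1 ∧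
      (k ≤ 2 * A.card ∨ (∑ i ∈ A, l i) < 1 / 2) := by
  classical
  set m := (k + 1) / 2 with hm
  have hm1 : 1 ≤ m := by omega
  have hmk : m < k := by omega
  have hm2 : k ≤ 2 * m := by omega
  have hm3 : 2 * m ≤ k + 1 := by omega
  have hcompl : ∀ A : Finset (Fin k), (∑ i ∈ univ \ A, l i) + (∑ i ∈ A, l i) = 1 := by
    intro A
    rw [Finset.sum_sdiff (Finset.subset_univ A)]
    simpa using hsum
  by_cases hex : ∃ B : Finset (Fin k), B.card = m ∧ ∑ i ∈ B, l i ≤ 1 / 2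
  · obtain ⟨B₀, hB₀c, hB₀s⟩ := hex
    obtain ⟨A, hAmem, hAmax⟩ := Finset.exists_max_image
      ((univ : Finset (Fin k)).powerset.filter (fun B => B.card = m ∧ ∑ i ∈ B, l i ≤ 1/2))
      (fun B => ∑ i ∈ B, l i)
      ⟨B₀, Finset.mem_filter.mpr ⟨Finset.mem_powerset.mpr (Finset.subset_univ _), hB₀c, hB₀s⟩⟩
    simp only [Finset.mem_filter, Finset.mem_powerset] at hAmem
    obtain ⟨-, hAcard, hAsum⟩ := hAmem
    have hcompne : (univ \ A).Nonempty := by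
      rw [← Finset.card_pos, Finset.card_sdiff_of_subset (Finset.subset_univ A), Finset.card_univ,
        Fintype.card_fin, hAcard]
      omega
    obtain ⟨x, hxmem, hxmax⟩ := Finset.exists_max_image (univ \ A) l hcompne
    have hxA : x ∉ A := (Finset.mem_sdiff.mp hxmem).2
    have hcompcard : (univ \ A).card = k - m := by
      rw [Finset.card_sdiff_of_subset (Finset.subset_univ A), Finset.card_univ, Fintype.card_fin, hAcard]
    have hgt : 1 / 2 < (∑ i ∈ A, l i) + l x := by
      by_contra hle
      push_neg at hle
      -- every element of A is ≥ l x
      have hstep : ∀ a ∈ A, l x ≤ l a := by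
        intro a ha
        have hxe : x ∉ A.erase a := fun h => hxA (Finset.mem_of_mem_erase h)
        have h1 : (insert x (A.erase a)).card = m := by
          rw [Finset.card_insert_of_notMem hxe, Finset.card_erase_of_mem ha, hAcard]
          omega
        have h2 : ∑ i ∈ insert x (A.erase a), l i = (∑ i ∈ A, l i) - l a + l x := by
          rw [Finset.sum_insert hxe, ← Finset.sum_erase_add A l ha]
          ring
        have h3 : ∑ i ∈ insert x (A.erase a), l i ≤ 1 / 2 := by
          rw [h2]; linarith [hpos a]
        have := hAmax _ (by
          simp only [Finset.mem_filter, Finset.mem_powerset]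
          exact ⟨Finset.subset_univ _, h1, h3⟩)
        rw [h2] at this
        linarith [hpos a]
      have c1 : (m : ℝ) * l x ≤ ∑ i ∈ A, l i := by
        have := Finset.card_nsmul_le_sum A l (l x) hstep
        rw [hAcard] at this
        simpa [nsmul_eq_mul] using this
      have c2 : ∑ i ∈ univ \ A, l i ≤ ((k - m : ℕ) : ℝ) * l x := by
        have := Finset.sum_le_card_nsmul (univ \ A) l (l x) (fun y hy => hxmax y hy)
        rw [hcompcard] at this
        simpa [nsmul_eq_mul] using this
      have hc3 := hcompl A
      have hcast : ((k - m : ℕ) : ℝ) = (k : ℝ) - m := by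
        push_cast [Nat.cast_sub hmk.le]; ring
      have hk2R : (k : ℝ) ≤ 2 * m := by exact_mod_cast hm2
      rw [hcast] at c2
      nlinarith [hpos x, c1, c2, hc3, hle, hk2R]
    exact ⟨A, x, hxA, hAsum, hgt, by omega, by omega, Or.inl (by omega)⟩
  · push_neg at hex
    -- choose a minimal-sum (m-1)-subset
    obtain ⟨A₀, -, hA₀c⟩ := Finset.exists_subset_card_eq (s := (univ : Finset (Fin k))) (n := m - 1)
      (by rw [Finset.card_univ, Fintype.card_fin]; omega)
    obtain ⟨A, hAmem, hAmin⟩ := Finset.exists_min_image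
      ((univ : Finset (Fin k)).powerset.filter (fun B => B.card = m - 1))
      (fun B => ∑ i ∈ B, l i)
      ⟨A₀, Finset.mem_filter.mpr ⟨Finset.mem_powerset.mpr (Finset.subset_univ _), hA₀c⟩⟩
    simp only [Finset.mem_filter, Finset.mem_powerset] at hAmem
    obtain ⟨-, hAcard⟩ := hAmem
    have hcompne : (univ \ A).Nonempty := by
      rw [← Finset.card_pos, Finset.card_sdiff_of_subset (Finset.subset_univ A), Finset.card_univ,
        Fintype.card_fin, hAcard]
      omega
    obtain ⟨x, hxmem⟩ := hcompne
    have hxA : x ∉ A := (Finset.mem_sdiff.mp hxmem).2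
    have hgt : 1 / 2 < (∑ i ∈ A, l i) + l x := by
      have := hex (insert x A) (by rw [Finset.card_insert_of_notMem hxA, hAcard]; omega)
      rw [Finset.sum_insert hxA] at this
      linarith
    have hlt : (∑ i ∈ A, l i) < 1 / 2 := by
      by_contra hge
      push_neg at hge
      rcases A.eq_empty_or_nonempty with hAe | hAne
      · rw [hAe] at hge; simp at hge; linarith
      · obtain ⟨a₀, ha₀A, ha₀max⟩ := Finset.exists_max_image A l hAne
        have hstep : ∀ y ∈ univ \ A, l a₀ ≤ l y := by
          intro y hy
          have hyA : y ∉ A := (Finset.mem_sdiff.mp hy).2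
          have hye : y ∉ A.erase a₀ := fun h => hyA (Finset.mem_of_mem_erase h)
          have h1 : (insert y (A.erase a₀)).card = m - 1 := by
            rw [Finset.card_insert_of_notMem hye, Finset.card_erase_of_mem ha₀A, hAcard]
            have : 1 ≤ A.card := Finset.card_pos.mpr hAne
            omega
          have h2 : ∑ i ∈ insert y (A.erase a₀), l i = (∑ i ∈ A, l i) - l a₀ + l y := by
            rw [Finset.sum_insert hye, ← Finset.sum_erase_add A l ha₀A]
            ring
          have := hAmin _ (by
            simp only [Finset.mem_filter, Finset.mem_powerset]
            exact ⟨Finset.subset_univ _, h1⟩)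
          rw [h2] at this
          linarith
        have c1 : ∑ i ∈ A, l i ≤ ((m - 1 : ℕ) : ℝ) * l a₀ := by
          have := Finset.sum_le_card_nsmul A l (l a₀) ha₀max
          rw [hAcard] at this
          simpa [nsmul_eq_mul] using this
        have c2 : ((k - (m - 1) : ℕ) : ℝ) * l a₀ ≤ ∑ i ∈ univ \ A, l i := by
          have := Finset.card_nsmul_le_sum (univ \ A) l (l a₀) hstep
          rw [Finset.card_sdiff_of_subset (Finset.subset_univ A), Finset.card_univ, Fintype.card_fin,
            hAcard] at this
          simpa [nsmul_eq_mul] using this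
        have hc3 := hcompl A
        have hcast1 : ((m - 1 : ℕ) : ℝ) = (m : ℝ) - 1 := by
          push_cast [Nat.cast_sub hm1]; ring
        have hcast2 : ((k - (m - 1) : ℕ) : ℝ) = (k : ℝ) - (m - 1) := by
          have : m - 1 ≤ k := by omega
          push_cast [Nat.cast_sub this, Nat.cast_sub hm1]; ring
        have hk2R : (m : ℝ) ≤ (k : ℝ) - (m - 1) := by
          have : 2 * m ≤ k + 1 := hm3
          have h' : (2 * m : ℝ) ≤ (k : ℝ) + 1 := by exact_mod_cast this
          linarith
        rw [hcast1] at c1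
        rw [hcast2] at c2
        nlinarith [hpos a₀, c1, c2, hc3, hge, hk2R]
    exact ⟨A, x, hxA, hlt.le, hgt, by omega, by omega, Or.inr hlt⟩

/-- For every partition `π` of `[0,1]` into `k` intervals with `diam π ≤ 1/4`, there is a
permutation `π'` of `π` such that for `h = 1, 2` the number of right endpoints of `π'` lying
in `I_h^1 = [(h-1)/2, h/2]` is between `k/2 - 1` and `k/2 + 1`. -/
theorem exists_halving_permutation (π : UnitPartition) (hd : π.diam ≤ 1 / 4) :
    ∃ π' : UnitPartition, IsPermutationOf π' π ∧ ∀ h : ℕ, 1 ≤ h → h ≤ 2 →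
      (π.k : ℝ) / 2 - 1 ≤
          (((Finset.range π'.k).filter
            (fun i => π'.t (i + 1) ∈ Set.Icc (((h : ℝ) - 1) / 2) ((h : ℝ) / 2))).card : ℝ) ∧
        (((Finset.range π'.k).filter
            (fun i => π'.t (i + 1) ∈ Set.Icc (((h : ℝ) - 1) / 2) ((h : ℝ) / 2))).card : ℝ) ≤
          (π.k : ℝ) / 2 + 1 := by
  classical
  have hl : ∀ i : Fin π.k, 0 < π.length i.val := fun i => sub_pos.mpr (π.mono i i.isLt)
  have hk2 : 2 ≤ π.k := by
    by_contra hcon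
    have hk1 : π.k = 1 := by have := π.k_pos; omega
    have h1 : π.length 0 ≤ π.diam := Finset.le_sup' π.length (by simp [π.k_pos])
    have h2 : π.length 0 = 1 := by
      unfold UnitPartition.length
      rw [show (0 : ℕ) + 1 = π.k from by omega, π.t_last, π.t_zero]
      ring
    rw [h2] at h1
    linarith
  have hsum1 : ∑ i : Fin π.k, π.length i.val = 1 := by
    rw [← Finset.sum_range (fun i => π.length i)]
    have := Finset.sum_range_sub π.t π.k
    simp only [UnitPartition.length]
    rw [this, π.t_zero, π.t_last]
    ring
  obtain ⟨A, x, hxA, hA1, hA2, hn1, hn2, hn3⟩ :=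
    exists_good_subset π.k hk2 (fun i => π.length i.val) hl hsum1
  set c := A.card with hc
  have hck : c + 1 ≤ π.k := by
    have := Finset.card_le_univ (insert x A)
    simp only [Finset.card_insert_of_notMem hxA, Finset.card_univ, Fintype.card_fin] at this
    omega
  set L := π.permList A x with hL
  set π' := π.permute L (π.permList_nodup A x hxA) (π.permList_mem A x)
    (π.permList_length A x hxA) with hπ'
  have hMlen : (L.map fun i => π.length i.val).length = π.k := by
    simpa using π.permList_length A x hxA
  have ht : ∀ n, π'.t n = ((L.map fun i => π.length i.val).take n).sum := fun n => rfl
  have hTc : π'.t c = ∑ i ∈ A, π.length i.val := π.permList_take_card A x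
  have hTc1 : π'.t (c + 1) = (∑ i ∈ A, π.length i.val) + π.length x.val := by
    have hb : c < (L.map fun i => π.length i.val).length := by rw [hMlen]; omega
    have h1 := List.sum_take_succ (L.map fun i => π.length i.val) c hb
    have h2 : (L.map fun i => π.length i.val)[c] = π.length x.val := by
      rw [List.getElem_map, π.permList_getElem_card A x (by simpa using hb)]
    rw [ht (c + 1), h1, h2, ← ht c, hTc]
  have hhalf1 : π'.t c ≤ 1 / 2 := by rw [hTc]; exact hA1
  have hhalf2 : 1 / 2 < π'.t (c + 1) := by rw [hTc1]; exact hA2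
  have hzero : π'.t 0 = 0 := π'.t_zero
  have hlast : π'.t π.k = 1 := π'.t_last
  have hmono' : ∀ {a b : ℕ}, a ≤ b → b ≤ π.k → π'.t a ≤ π'.t b :=
    fun hab hb => π'.t_mono hab hb
  have hstrict : ∀ {a b : ℕ}, a < b → b ≤ π.k → π'.t a < π'.t b :=
    fun hab hb => π'.t_strictMono hab hb
  refine ⟨π', ⟨rfl, ?_⟩, ?_⟩
  · -- permutation equivalence
    have hinj : Function.Injective
        (fun i : Fin π.k => L.get (Fin.cast (π.permList_length A x hxA).symm i)) := by
      intro a b hab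
      have := List.nodup_iff_injective_get.mp (π.permList_nodup A x hxA) hab
      simpa [Fin.ext_iff] using this
    refine ⟨Equiv.ofBijective _ (Finite.injective_iff_bijective.mp hinj), ?_⟩
    intro i
    have hb : (i : ℕ) < (L.map fun j => π.length j.val).length := by
      rw [hMlen]; exact i.isLt
    show π'.t (i + 1) - π'.t i = _
    rw [ht (i + 1), ht i, List.sum_take_succ _ i hb, List.getElem_map]
    simp [Equiv.ofBijective]
  · -- the counting estimates
    have hN1 : (Finset.range π'.k).filter
        (fun i => π'.t (i + 1) ∈ Set.Icc (0 : ℝ) (1 / 2)) = Finset.range c := by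
      ext i
      simp only [Finset.mem_filter, Finset.mem_range, Set.mem_Icc,
        show π'.k = π.k from rfl]
      constructor
      · rintro ⟨hik, -, hhalf⟩
        by_contra hic
        push_neg at hic
        have : π'.t (c + 1) ≤ π'.t (i + 1) := hmono' (by omega) (by omega)
        linarith
      · intro hic
        have hik : i < π.k := by omega
        refine ⟨hik, ?_, ?_⟩
        · have : π'.t 0 ≤ π'.t (i + 1) := hmono' (by omega) (by omega)
          linarith [hzero]
        · have : π'.t (i + 1) ≤ π'.t c := hmono' (by omega) (by omega)
          linarith
    have hcard1 : ((Finset.range π'.k).filter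
        (fun i => π'.t (i + 1) ∈ Set.Icc (0 : ℝ) (1 / 2))).card = c := by
      rw [hN1, Finset.card_range]
    have hsetlo : (Finset.range π'.k) \ Finset.range c ⊆ (Finset.range π'.k).filter
        (fun i => π'.t (i + 1) ∈ Set.Icc (1 / 2 : ℝ) 1) := by
      intro i hi
      simp only [Finset.mem_sdiff, Finset.mem_range, not_lt,
        show π'.k = π.k from rfl] at hi
      obtain ⟨hik, hci⟩ := hi
      simp only [Finset.mem_filter, Finset.mem_range, Set.mem_Icc,
        show π'.k = π.k from rfl]
      refine ⟨hik, ?_, ?_⟩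
      · have : π'.t (c + 1) ≤ π'.t (i + 1) := hmono' (by omega) (by omega)
        linarith
      · have : π'.t (i + 1) ≤ π'.t π.k := hmono' (by omega) (le_refl _)
        linarith [hlast]
    have hsethi : (Finset.range π'.k).filter
        (fun i => π'.t (i + 1) ∈ Set.Icc (1 / 2 : ℝ) 1) ⊆
        (Finset.range π'.k) \ Finset.range (c - 1) := by
      intro i hi
      simp only [Finset.mem_filter, Finset.mem_range, Set.mem_Icc,
        show π'.k = π.k from rfl] at hi
      obtain ⟨hik, hh, -⟩ := hi
      simp only [Finset.mem_sdiff, Finset.mem_range, not_lt,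
        show π'.k = π.k from rfl]
      refine ⟨hik, ?_⟩
      by_contra hcon
      push_neg at hcon
      have : π'.t (i + 1) < π'.t c := hstrict (by omega) (by omega)
      linarith
    have hsethi' : (∑ i ∈ A, π.length i.val) < 1 / 2 → (Finset.range π'.k).filter
        (fun i => π'.t (i + 1) ∈ Set.Icc (1 / 2 : ℝ) 1) ⊆
        (Finset.range π'.k) \ Finset.range c := by
      intro hlt i hi
      simp only [Finset.mem_filter, Finset.mem_range, Set.mem_Icc,
        show π'.k = π.k from rfl] at hi
      obtain ⟨hik, hh, -⟩ := hi
      simp only [Finset.mem_sdiff, Finset.mem_range, not_lt,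
        show π'.k = π.k from rfl]
      refine ⟨hik, ?_⟩
      by_contra hcon
      push_neg at hcon
      have : π'.t (i + 1) ≤ π'.t c := hmono' (by omega) (by omega)
      rw [hTc] at this
      linarith
    have hsdc : ((Finset.range π'.k) \ Finset.range c).card = π.k - c := by
      rw [Finset.card_sdiff_of_subset (Finset.range_subset_range.mpr (show c ≤ π'.k by show c ≤ π.k; omega)),
        Finset.card_range, Finset.card_range]
      rfl
    have hsdc1 : ((Finset.range π'.k) \ Finset.range (c - 1)).card = π.k - (c - 1) := by
      rw [Finset.card_sdiff_of_subset (Finset.range_subset_range.mpr (show c - 1 ≤ π'.k by show c - 1 ≤ π.k; omega)),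
        Finset.card_range, Finset.card_range]
      rfl
    set N := ((Finset.range π'.k).filter
        (fun i => π'.t (i + 1) ∈ Set.Icc (1 / 2 : ℝ) 1)).card with hN
    have hlo : π.k - c ≤ N := by
      rw [← hsdc]; exact Finset.card_le_card hsetlo
    have hhi : N ≤ π.k - (c - 1) := by
      rw [← hsdc1]; exact Finset.card_le_card hsethi
    have hlo' : π.k ≤ 2 * N + 2 := by omega
    have hhi' : 2 * N ≤ π.k + 2 := by
      rcases hn3 with hcase | hcase
      · omega
      · have : N ≤ π.k - c := by
          rw [← hsdc]; exact Finset.card_le_card (hsethi' hcase)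
        omega
    intro h hh1 hh2
    interval_cases h
    · rw [show (((1 : ℕ) : ℝ) - 1) / 2 = (0 : ℝ) from by norm_num,
        show ((1 : ℕ) : ℝ) / 2 = (1 / 2 : ℝ) from by norm_num, hcard1]
      have r1 : (π.k : ℝ) ≤ 2 * c + 2 := by exact_mod_cast hn1
      have r2 : (2 * c : ℝ) ≤ π.k + 1 := by exact_mod_cast hn2
      constructor <;> [linarith; linarith]
    · rw [show (((2 : ℕ) : ℝ) - 1) / 2 = (1 / 2 : ℝ) from by norm_num,
        show ((2 : ℕ) : ℝ) / 2 = (1 : ℝ) from by norm_num, ← hN]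
      have r1 : (π.k : ℝ) ≤ 2 * N + 2 := by exact_mod_cast hlo'
      have r2 : (2 * N : ℝ) ≤ π.k + 2 := by exact_mod_cast hhi'
      constructor <;> [linarith; linarith]
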